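/- Let G = W(C_n) be the whiskered cycle, n ≥ 3 odd, say n = 2m+1, and I = I(G). Set M = (x_1x_2)(x_3x_4)⋯(x_{2m-1}x_{2m}), a minimal generator of I^m. Then for any even j with 2 ≤ j ≤ n-1, the sequence x_j, x_{j+1}, x_{j+2}, ..., x_n is an even-connected walk with respect to M; in particular x_j x_n · M ∈ I^{m+1}. -/

import Mathlib

open MvPolynomial
open Fin.NatCast

/-- The whiskered cycle `W(C_n)`: `Sum.inl i` is the cycle vertex `x_{i+1}` and
`Sum.inr i` is the whisker vertex `x_{n+i+1}`. -/
def whiskerCycle (n : ℕ) [NeZero n] : SimpleGraph (Fin n ⊕ Fin n) :=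
  SimpleGraph.fromRel (fun a b =>
    (∃ i : Fin n, a = Sum.inl i ∧ b = Sum.inl (i + 1)) ∨
    (∃ i : Fin n, a = Sum.inl i ∧ b = Sum.inr i))

/-- The edge ideal of a graph `G`. -/
noncomputable def edgeIdeal (K : Type*) [Field K] {V : Type*} (G : SimpleGraph V) :
    Ideal (MvPolynomial V K) :=
  Ideal.span {m | ∃ u v, G.Adj u v ∧ m = X u * X v}

lemma fin_cast_inj {n : ℕ} [NeZero n] {a b : ℕ} (ha : a < n) (hb : b < n)
    (h : ((a : ℕ) : Fin n) = ((b : ℕ) : Fin n)) : a = b := by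
  have := congrArg Fin.val h
  rwa [Fin.val_cast_of_lt ha, Fin.val_cast_of_lt hb] at this

lemma adj_cycle {n : ℕ} [NeZero n] {a : ℕ} (h : a + 1 < n) :
    (whiskerCycle n).Adj (Sum.inl ((a : ℕ) : Fin n)) (Sum.inl ((a + 1 : ℕ) : Fin n)) := by
  rw [whiskerCycle, SimpleGraph.fromRel_adj]
  constructor
  · intro hEq
    have := fin_cast_inj (by omega) h (Sum.inl_injective hEq)
    omega
  · exact Or.inl (Or.inl ⟨((a : ℕ) : Fin n), rfl, by rw [Nat.cast_add, Nat.cast_one]⟩)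

lemma edge_mem (K : Type*) [Field K] {n : ℕ} [NeZero n] {a : ℕ} (h : a + 1 < n) :
    X (Sum.inl ((a : ℕ) : Fin n)) * X (Sum.inl ((a + 1 : ℕ) : Fin n)) ∈
      edgeIdeal K (whiskerCycle n) := by
  exact Ideal.subset_span ⟨_, _, adj_cycle h, rfl⟩

lemma prod_pow_mem {R : Type*} [CommRing R] (I : Ideal R) :
    ∀ (k : ℕ) (f : ℕ → R), (∀ t < k, f t ∈ I) →
      (∏ t ∈ Finset.range k, f t) ∈ I ^ k := by
  intro k
  induction k with
  | zero => simp
  | succ k ih =>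
    intro f hf
    rw [Finset.prod_range_succ, pow_succ]
    exact Ideal.mul_mem_mul (ih f fun t ht => hf t (by omega)) (hf k (by omega))

lemma aux_chain (K : Type*) [Field K] (n m : ℕ) [NeZero n] (hn : n = 2 * m + 1) :
    ∀ (d q : ℕ), q + d = m → 1 ≤ q →
      X (Sum.inl ((2 * q - 1 : ℕ) : Fin n)) * X (Sum.inl ((2 * m : ℕ) : Fin n)) *
        ∏ t ∈ Finset.Ico q m,
          (X (Sum.inl ((2 * t : ℕ) : Fin n)) * X (Sum.inl ((2 * t + 1 : ℕ) : Fin n))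
            : MvPolynomial (Fin n ⊕ Fin n) K) ∈
        edgeIdeal K (whiskerCycle n) ^ (d + 1) := by
  intro d
  induction d with
  | zero =>
    intro q hq hq1
    have hqm : q = m := by omega
    subst hqm
    rw [Finset.Ico_self, Finset.prod_empty, mul_one, pow_one]
    have h2 : (2 * q : ℕ) = (2 * q - 1) + 1 := by omega
    rw [h2]
    exact edge_mem K (by omega)
  | succ d ih =>
    intro q hq hq1
    have hqm : q < m := by omega
    rw [Finset.prod_eq_prod_Ico_succ_bot hqm]
    have key : X (Sum.inl ((2 * q - 1 : ℕ) : Fin n)) * X (Sum.inl ((2 * m : ℕ) : Fin n)) *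
        ((X (Sum.inl ((2 * q : ℕ) : Fin n)) * X (Sum.inl ((2 * q + 1 : ℕ) : Fin n))) *
          ∏ t ∈ Finset.Ico (q + 1) m,
            (X (Sum.inl ((2 * t : ℕ) : Fin n)) * X (Sum.inl ((2 * t + 1 : ℕ) : Fin n))
              : MvPolynomial (Fin n ⊕ Fin n) K)) =
        (X (Sum.inl ((2 * q - 1 : ℕ) : Fin n)) * X (Sum.inl (((2 * q - 1) + 1 : ℕ) : Fin n))) *
        (X (Sum.inl ((2 * (q + 1) - 1 : ℕ) : Fin n)) * X (Sum.inl ((2 * m : ℕ) : Fin n)) *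
          ∏ t ∈ Finset.Ico (q + 1) m,
            (X (Sum.inl ((2 * t : ℕ) : Fin n)) * X (Sum.inl ((2 * t + 1 : ℕ) : Fin n)))) := by
      have e1 : (2 * q - 1) + 1 = 2 * q := by omega
      have e2 : 2 * (q + 1) - 1 = 2 * q + 1 := by omega
      rw [e1, e2]; ring
    rw [key, pow_succ']
    exact Ideal.mul_mem_mul (edge_mem K (by omega)) (ih (q + 1) (by omega) (by omega))

lemma sym2_extract {n : ℕ} [NeZero n] {j a t r m : ℕ} (hn : n = 2 * m + 1)
    (hj : j = r + r) (hj2 : 2 ≤ j) (ht : t < m) (ha : 2 * a + 2 ≤ n - j)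
    (h : s((Sum.inl ((j - 1 + (2 * a + 1) : ℕ) : Fin n) : Fin n ⊕ Fin n),
          Sum.inl ((j - 1 + (2 * a + 2) : ℕ) : Fin n)) =
        s(Sum.inl ((2 * t : ℕ) : Fin n), Sum.inl ((2 * t + 1 : ℕ) : Fin n))) :
    j + 2 * a = 2 * t := by
  have b1 : j - 1 + (2 * a + 1) < n := by omega
  rw [Sym2.eq_iff] at h
  rcases h with ⟨h1, _⟩ | ⟨h1, _⟩ <;>
    have := fin_cast_inj b1 (by omega) (Sum.inl_injective h1) <;> omega

/-- let `n = 2m+1` be odd, `G = W(C_n)` and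
`M = (x_1x_2)(x_3x_4)⋯(x_{2m-1}x_{2m})`, a minimal generator of `I^m`.  For
any even `j` with `2 ≤ j ≤ n-1` the sequence `x_j, x_{j+1}, …, x_n`
(formally `p k = x_{j+k} = Sum.inl (j-1+k)`, `0 ≤ k ≤ n-j`) is an
even-connected walk with respect to `M`: consecutive vertices are adjacent,
every odd-position edge `{p_{2k+1}, p_{2k+2}}` is one of the edges
`x_{2t+1}x_{2t+2}` (`t < m`) of `M`, and each such edge is used at most once
(its multiplicity in `M`); in particular `x_j x_n · M ∈ I^{m+1}`. -/
theorem even_walk_to_xn (K : Type*) [Field K] (n m : ℕ) [NeZero n]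
    (hn : n = 2 * m + 1) (hm : 1 ≤ m)
    (M : MvPolynomial (Fin n ⊕ Fin n) K)
    (hM : M = ∏ t ∈ Finset.range m,
      X (Sum.inl ((2 * t : ℕ) : Fin n)) * X (Sum.inl ((2 * t + 1 : ℕ) : Fin n)))
    (j : ℕ) (hj2 : 2 ≤ j) (hjn : j ≤ n - 1) (hje : Even j) :
    (∀ k < n - j, (whiskerCycle n).Adj (Sum.inl ((j - 1 + k : ℕ) : Fin n))
        (Sum.inl ((j - 1 + (k + 1) : ℕ) : Fin n))) ∧
    (∀ k : ℕ, 2 * k + 2 ≤ n - j → ∃ t < m,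
      s((Sum.inl ((j - 1 + (2 * k + 1) : ℕ) : Fin n) : Fin n ⊕ Fin n),
          Sum.inl ((j - 1 + (2 * k + 2) : ℕ) : Fin n)) =
        s(Sum.inl ((2 * t : ℕ) : Fin n), Sum.inl ((2 * t + 1 : ℕ) : Fin n))) ∧
    (∀ t < m,
      {k : ℕ | 2 * k + 2 ≤ n - j ∧
        s((Sum.inl ((j - 1 + (2 * k + 1) : ℕ) : Fin n) : Fin n ⊕ Fin n),
            Sum.inl ((j - 1 + (2 * k + 2) : ℕ) : Fin n)) =
          s(Sum.inl ((2 * t : ℕ) : Fin n), Sum.inl ((2 * t + 1 : ℕ) : Fin n))}.ncard ≤ 1) ∧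
    X (Sum.inl ((j - 1 : ℕ) : Fin n)) * X (Sum.inl ((n - 1 : ℕ) : Fin n)) * M ∈
      edgeIdeal K (whiskerCycle n) ^ (m + 1) := by
  obtain ⟨r, hr⟩ := hje
  have hr1 : 1 ≤ r := by omega
  have hrm : r ≤ m := by omega
  refine ⟨?_, ?_, ?_, ?_⟩
  · -- consecutive adjacency
    intro k hk
    have e : j - 1 + (k + 1) = (j - 1 + k) + 1 := by omega
    rw [e]
    exact adj_cycle (by omega)
  · -- each odd edge is an edge of M
    intro k hk
    refine ⟨r + k, by omega, ?_⟩
    have e1 : j - 1 + (2 * k + 1) = 2 * (r + k) := by omega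
    have e2 : j - 1 + (2 * k + 2) = 2 * (r + k) + 1 := by omega
    rw [e1, e2]
  · -- each edge of M used at most once
    intro t ht
    set S := {k : ℕ | 2 * k + 2 ≤ n - j ∧
        s((Sum.inl ((j - 1 + (2 * k + 1) : ℕ) : Fin n) : Fin n ⊕ Fin n),
            Sum.inl ((j - 1 + (2 * k + 2) : ℕ) : Fin n)) =
          s(Sum.inl ((2 * t : ℕ) : Fin n), Sum.inl ((2 * t + 1 : ℕ) : Fin n))} with hS
    have hss : S.Subsingleton := by
      intro a ha b hb
      have ea := sym2_extract hn hr hj2 ht ha.1 ha.2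
      have eb := sym2_extract hn hr hj2 ht hb.1 hb.2
      omega
    rw [Set.ncard_le_one hss.finite]
    intro a ha b hb
    exact hss ha hb
  · -- membership in I^(m+1)
    have hn1 : n - 1 = 2 * m := by omega
    have hj1 : j - 1 = 2 * r - 1 := by omega
    rw [hM, hn1, hj1, Finset.range_eq_Ico,
      ← Finset.prod_Ico_consecutive _ (Nat.zero_le r) hrm]
    have key : X (Sum.inl ((2 * r - 1 : ℕ) : Fin n)) * X (Sum.inl ((2 * m : ℕ) : Fin n)) *
        ((∏ t ∈ Finset.Ico 0 r,
            (X (Sum.inl ((2 * t : ℕ) : Fin n)) * X (Sum.inl ((2 * t + 1 : ℕ) : Fin n))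
              : MvPolynomial (Fin n ⊕ Fin n) K)) *
          ∏ t ∈ Finset.Ico r m,
            (X (Sum.inl ((2 * t : ℕ) : Fin n)) * X (Sum.inl ((2 * t + 1 : ℕ) : Fin n)))) =
        (∏ t ∈ Finset.Ico 0 r,
            (X (Sum.inl ((2 * t : ℕ) : Fin n)) * X (Sum.inl ((2 * t + 1 : ℕ) : Fin n)))) *
        (X (Sum.inl ((2 * r - 1 : ℕ) : Fin n)) * X (Sum.inl ((2 * m : ℕ) : Fin n)) *
          ∏ t ∈ Finset.Ico r m,
            (X (Sum.inl ((2 * t : ℕ) : Fin n)) * X (Sum.inl ((2 * t + 1 : ℕ) : Fin n)))) := by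
      ring
    rw [key]
    have hsum : m + 1 = r + (m - r + 1) := by omega
    rw [hsum, pow_add]
    refine Ideal.mul_mem_mul ?_ (aux_chain K n m hn (m - r) r (by omega) hr1)
    rw [← Finset.range_eq_Ico]
    exact prod_pow_mem _ r _ fun t ht => edge_mem K (by omega)
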